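/- Let x and y be strings over a finite alphabet Σ, let q ≥ 2 be an integer, let P be a string over Σ with |P| = q, and let a, b be integers with 0 ≤ a < |x| and 0 ≤ b < |y|. Let t = suf(x, q−1)·pre(y, q−1), L = max(1, a − max(0, |x| − q + 1) + 1), and R = min(q−1, |x|) − max(0, b + q − 1 − |y|). Then the number of occurrences of P in drop(x, a)·pre(y, |y| − b) that cross the boundary between the two parts, i.e., |{ i ∈ Occ(drop(x,a)·pre(y,|y|−b), P) : i ≤ |x| − a < i + q − 1 }|, equals |{ j ∈ Occ(t, P) : L ≤ j ≤ R }|. -/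

import Mathlib

/-- `Occ T P` is the set of (1-based) occurrence positions of `P` in `T`:
`{ i : 1 ≤ i ≤ |T|−|P|+1 and T[i:i+|P|−1] = P }`. -/
def Occ {α : Type*} [DecidableEq α] (T P : List α) : Finset ℕ :=
  (Finset.Icc 1 (T.length - P.length + 1)).filter
    (fun i => (T.drop (i - 1)).take P.length = P)

/-- `pre T k = T[1:min(k,|T|)]`, the prefix of `T` of length at most `k`. -/
def pre {α : Type*} (T : List α) (k : ℕ) : List α := T.take k

/-- `suf T k = T[|T|−min(k,|T|)+1:|T|]`, the suffix of `T` of length at most `k`. -/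
def suf {α : Type*} (T : List α) (k : ℕ) : List α := T.drop (T.length - k)

/-- `listPow w p` is the `p`-fold concatenation `w^p`. -/
def listPow {α : Type*} (w : List α) : ℕ → List α
  | 0 => []
  | p + 1 => w ++ listPow w p


lemma mem_occ_iff' {α : Type*} [DecidableEq α] (T P : List α) (hP : 1 ≤ P.length) (i : ℕ) :
    i ∈ (Finset.Icc 1 (T.length - P.length + 1)).filter
      (fun i => (T.drop (i - 1)).take P.length = P) ↔
    1 ≤ i ∧ (T.drop (i - 1)).take P.length = P := by
  simp only [Finset.mem_filter, Finset.mem_Icc]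
  constructor
  · rintro ⟨⟨h1, _⟩, h3⟩; exact ⟨h1, h3⟩
  · rintro ⟨h1, h2⟩
    have := congrArg List.length h2
    simp only [List.length_take, List.length_drop] at this
    exact ⟨⟨h1, by omega⟩, h2⟩

lemma match_iff' {α : Type*} [DecidableEq α] (x y P : List α) (a k c q : ℕ)
    (hk : 1 ≤ k) (hk2 : a + k - 1 ≤ x.length) (hcr : x.length < (a + k - 1) + q)
    (hP : P.length = q) :
    ((x.drop a ++ y.take c).drop (k - 1)).take q = P ↔
      (q - (x.length - (a + k - 1)) ≤ c ∧ q - (x.length - (a + k - 1)) ≤ y.length ∧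
        x.drop (a + k - 1) ++ y.take (q - (x.length - (a + k - 1))) = P) := by
  set s := q - (x.length - (a + k - 1)) with hs
  have h1 : (x.drop a ++ y.take c).drop (k - 1) = x.drop (a + k - 1) ++ y.take c := by
    rw [List.drop_append_of_le_length (by simp only [List.length_drop]; omega), List.drop_drop,
      show a + (k - 1) = a + k - 1 from by omega]
  have hlen : (x.drop (a + k - 1)).length = x.length - (a + k - 1) := List.length_drop
  rw [h1, List.take_append, List.take_of_length_le (by omega), hlen,
    List.take_take]
  constructor
  · intro h
    have hl := congrArg List.length h
    simp only [List.length_append, List.length_take, hlen, hP] at hl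
    have hsc : s ≤ c ∧ s ≤ y.length := by omega
    refine ⟨hsc.1, hsc.2, ?_⟩
    rwa [show min (q - (x.length - (a + k - 1))) c = s by omega] at h
  · rintro ⟨hsc, hsm, h⟩
    rwa [show min (q - (x.length - (a + k - 1))) c = s by omega]

/-- occurrences of a `q`-gram `P` in `drop(x,a)·pre(y,|y|−b)` that cross the
boundary between the two parts are counted by the occurrences `j` of `P` in
`t = suf(x,q−1)·pre(y,q−1)` with `L ≤ j ≤ R`, where
`L = max(1, a − max(0,|x|−q+1) + 1)` and `R = min(q−1,|x|) − max(0, b+q−1−|y|)`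
(in `ℕ`, `max(0,|x|−q+1) = |x|+1−q` and `max(0,b+q−1−|y|) = b+q−1−|y|`). -/
theorem truncated_crossing_count {α : Type*} [Fintype α] [DecidableEq α]
    (x y : List α) (q : ℕ) (hq : 2 ≤ q) (P : List α) (hP : P.length = q)
    (a b : ℕ) (ha : a < x.length) (hb : b < y.length) :
    ((Occ (x.drop a ++ pre y (y.length - b)) P).filter
        (fun i => i ≤ x.length - a ∧ x.length - a < i + q - 1)).card =
      ((Occ (suf x (q - 1) ++ pre y (q - 1)) P).filter
        (fun j => max 1 (a - (x.length + 1 - q) + 1) ≤ j ∧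
          j ≤ min (q - 1) x.length - (b + q - 1 - y.length))).card := by
  have hP1 : 1 ≤ P.length := by omega
  set N := x.length with hN
  set M := y.length with hM
  have key1 : ∀ i : ℕ,
      (i ∈ (Occ (x.drop a ++ pre y (M - b)) P).filter
        (fun i => i ≤ N - a ∧ N - a < i + q - 1)) ↔
      (1 ≤ i ∧ i ≤ N - a ∧ N - a < i + q - 1 ∧
        q - (N - (a + i - 1)) ≤ M - b ∧ q - (N - (a + i - 1)) ≤ M ∧
        x.drop (a + i - 1) ++ y.take (q - (N - (a + i - 1))) = P) := by
    intro i
    rw [Finset.mem_filter, Occ, pre, mem_occ_iff' _ _ hP1, hP]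
    constructor
    · rintro ⟨⟨h1, h2⟩, h3, h4⟩
      have := (match_iff' x y P a i (M - b) q h1 (by omega) (by omega) hP).mp h2
      exact ⟨h1, h3, h4, this.1, this.2.1, this.2.2⟩
    · rintro ⟨h1, h3, h4, h5, h6, h7⟩
      exact ⟨⟨h1, (match_iff' x y P a i (M - b) q h1 (by omega) (by omega) hP).mpr
        ⟨h5, h6, h7⟩⟩, h3, h4⟩
  have key2 : ∀ j : ℕ,
      (j ∈ (Occ (suf x (q - 1) ++ pre y (q - 1)) P).filter
        (fun j => max 1 (a - (N + 1 - q) + 1) ≤ j ∧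
          j ≤ min (q - 1) N - (b + q - 1 - M))) ↔
      (1 ≤ j ∧ max 1 (a - (N + 1 - q) + 1) ≤ j ∧
        j ≤ min (q - 1) N - (b + q - 1 - M) ∧
        q - (N - ((N - (q - 1)) + j - 1)) ≤ q - 1 ∧
        q - (N - ((N - (q - 1)) + j - 1)) ≤ M ∧
        x.drop ((N - (q - 1)) + j - 1) ++ y.take (q - (N - ((N - (q - 1)) + j - 1))) = P) := by
    intro j
    rw [Finset.mem_filter, Occ, pre, suf, mem_occ_iff' _ _ hP1, hP]
    constructor
    · rintro ⟨⟨h1, h2⟩, h3, h4⟩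
      have := (match_iff' x y P (N - (q - 1)) j (q - 1) q h1 (by omega) (by omega) hP).mp h2
      exact ⟨h1, h3, h4, this.1, this.2.1, this.2.2⟩
    · rintro ⟨h1, h3, h4, h5, h6, h7⟩
      exact ⟨⟨h1, (match_iff' x y P (N - (q - 1)) j (q - 1) q h1 (by omega) (by omega) hP).mpr
        ⟨h5, h6, h7⟩⟩, h3, h4⟩
  apply Finset.card_bij' (fun i _ => i + a - (N - (q - 1))) (fun j _ => j + (N - (q - 1)) - a)
  · intro i hi
    rw [key1] at hi
    obtain ⟨h1, h3, h4, h5, h6, h7⟩ := hi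
    rw [key2]
    have hidx : (N - (q - 1)) + (i + a - (N - (q - 1))) - 1 = a + i - 1 := by omega
    rw [hidx]
    exact ⟨by omega, by omega, by omega, by omega, by omega, h7⟩
  · intro j hj
    rw [key2] at hj
    obtain ⟨h1, h3, h4, h5, h6, h7⟩ := hj
    rw [key1]
    have hidx : a + (j + (N - (q - 1)) - a) - 1 = (N - (q - 1)) + j - 1 := by omega
    rw [hidx]
    exact ⟨by omega, by omega, by omega, by omega, by omega, h7⟩
  · intro i hi
    rw [key1] at hi
    omega
  · intro j hj
    rw [key2] at hj
    omega
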